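/- In the tit-for-tat production dynamic, for all players i, j and all ℓ ∈ ℕ, y_{i,j}(2ℓ+1) ≤ (x_i(1)·y_{i,j}(1)/c_i) · (v_j/v*)^ℓ, where c_i > 0 is any constant with x_i(2ℓ+1) ≥ c_i·(v_i·v*)^ℓ for all ℓ, and v* = max_k v_k. -/

import Mathlib

open Filter Finset

theorem stmt_15
(n : ℕ) (x : ℕ → Fin n → ℝ) (y : ℕ → Fin n → Fin n → ℝ) (v : Fin n → ℝ)
    (hv : ∀ j, 0 < v j)
    (hx : ∀ t i, 0 < x t i)
    (hy : ∀ t i j, 0 < y t i j)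
    (hsum : ∀ t i, ∑ j, y t i j = 1)
    (hprod : ∀ t i, x (t + 1) i = ∑ j, v j * (y t j i * x t j))
    (hupd : ∀ t i j, y (t + 1) i j = v j * (y t j i * x t j) / x (t + 1) i)
(vstar : ℝ) (hmax : ∀ j, v j ≤ vstar) (iStar : Fin n) (hiStar : v iStar = vstar)
    (i : Fin n) (c : ℝ) (hc : 0 < c)
    (hlb : ∀ l : ℕ, c * (v i * vstar) ^ l ≤ x (2 * l + 1) i)
    (j : Fin n) (l : ℕ) :
    y (2 * l + 1) i j ≤ (x 1 i * y 1 i j / c) * (v j / vstar) ^ l := by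
  have hvstar : 0 < vstar := hiStar ▸ hv iStar
  have step : ∀ t (a b : Fin n), x (t+1) a * y (t+1) a b = v b * (x t b * y t b a) := by
    intro t a b
    rw [hupd]
    field_simp [(hx (t+1) a).ne']
  have key : ∀ l : ℕ, x (2*l+1) i * y (2*l+1) i j = (v i * v j) ^ l * (x 1 i * y 1 i j) := by
    intro l
    induction l with
    | zero => simp
    | succ m ih =>
      have h1 : 2 * (m+1) + 1 = (2*m+1) + 1 + 1 := by ring
      rw [h1, step, step, ih]
      ring
  have hxpos := hx (2*l+1) i
  have hvi := hv i
  have hlbpos : 0 < c * (v i * vstar) ^ l := by positivity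
  have hyeq : y (2*l+1) i j = (v i * v j) ^ l * (x 1 i * y 1 i j) / x (2*l+1) i := by
    rw [← key l, mul_div_cancel_left₀ _ (hx (2*l+1) i).ne']
  rw [hyeq]
  have hnum : 0 ≤ (v i * v j) ^ l * (x 1 i * y 1 i j) := by
    have := hv i; have := hv j; have := hx 1 i; have := hy 1 i j; positivity
  calc (v i * v j) ^ l * (x 1 i * y 1 i j) / x (2*l+1) i
      ≤ (v i * v j) ^ l * (x 1 i * y 1 i j) / (c * (v i * vstar) ^ l) :=
        div_le_div_of_nonneg_left hnum hlbpos (hlb l) |>.trans_eq rfl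
    _ = (x 1 i * y 1 i j / c) * (v j / vstar) ^ l := by
        rw [div_pow]
        field_simp
        ring
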